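/- Let C ⊆ T be integral domains such that: (1) C is a Krull domain and T is a unique factorization domain; (2) the induced morphism Spec(T) → Spec(C) is an open immersion; (3) the closed subset Spec(C) \ Spec(T) equals V(p) for a single height-one prime ideal p of C, or is empty; (4) T^× = C^×; (5) no prime element of T belongs to p. Then T = C. -/

import Mathlib

/-- A Krull domain: the localization at every height-one prime is a discrete valuation ring,
every nonzero element lies in only finitely many height-one primes, and the domain is the
intersection of its localizations at height-one primes inside its fraction field. -/
def IsKrullDomain (R : Type*) [CommRing R] [IsDomain R] : Prop :=
  (∀ p : PrimeSpectrum R, Order.height p = 1 →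
      IsDiscreteValuationRing (Localization.AtPrime p.asIdeal)) ∧
  (∀ x : R, x ≠ 0 → {p : PrimeSpectrum R | Order.height p = 1 ∧ x ∈ p.asIdeal}.Finite) ∧
  (∀ x : FractionRing R,
      (∀ p : PrimeSpectrum R, Order.height p = 1 →
        ∃ a s : R, s ∉ p.asIdeal ∧
          x * algebraMap R (FractionRing R) s = algebraMap R (FractionRing R) a) →
      x ∈ (algebraMap R (FractionRing R)).range)

universe u

section Auxiliary

open AlgebraicGeometry PrimeSpectrum CategoryTheory

lemma krull_aux_surj {X Y Z W : CommRingCat.{u}} (a : X ⟶ Y) (b : Y ⟶ Z) (c : Z ⟶ W)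
    (ha : Function.Bijective a.hom) (hc : Function.Bijective c.hom)
    (h : Function.Bijective (a ≫ b ≫ c).hom) : Function.Surjective b.hom := by
  intro y
  obtain ⟨z, hz⟩ := h.2 (c.hom y)
  exact ⟨a.hom z, hc.1 (by simpa using hz)⟩

/-- Localization surjectivity coming from the open immersion `Spec T → Spec C`. -/
lemma krull_aux_L1 (C T : Type u) [CommRing C] [IsDomain C] [CommRing T] [IsDomain T]
    [Algebra C T]
    (h2 : AlgebraicGeometry.IsOpenImmersion
      (AlgebraicGeometry.Spec.map (CommRingCat.ofHom (algebraMap C T))))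
    (x : T) (q' : PrimeSpectrum T) :
    ∃ a s : C, s ∉ (PrimeSpectrum.comap (algebraMap C T) q').asIdeal ∧
      algebraMap C T s * x = algebraMap C T a := by
  set f := CommRingCat.ofHom (algebraMap C T) with hf
  haveI := h2
  have hiso1 : IsIso ((Spec.map f).stalkMap q') :=
    (AlgebraicGeometry.IsOpenImmersion.iff_isIso_stalkMap.1 h2).2 q'
  have heq := AlgebraicGeometry.localRingHom_comp_stalkIso f q'
  have hb : Function.Bijective ((Spec.sheafedSpaceMap f).hom.stalkMap q').hom :=
    (ConcreteCategory.isIso_iff_bijective _).1 (by exact hiso1)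
  rw [← heq] at hb
  have hsurj : Function.Surjective (Localization.localRingHom
      (PrimeSpectrum.comap f.hom q').asIdeal q'.asIdeal f.hom rfl) :=
    krull_aux_surj _ _ _ (RingEquiv.bijective _) (RingEquiv.bijective _) hb
  obtain ⟨y, hy⟩ := hsurj (algebraMap T (Localization.AtPrime q'.asIdeal) x)
  obtain ⟨⟨a, s⟩, hys⟩ := IsLocalization.surj
    (M := (PrimeSpectrum.comap f.hom q').asIdeal.primeCompl) y
  refine ⟨a, s.1, s.2, ?_⟩
  have := congrArg (Localization.localRingHom
      (PrimeSpectrum.comap f.hom q').asIdeal q'.asIdeal f.hom rfl) hys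
  rw [map_mul, hy] at this
  erw [Localization.localRingHom_to_map, Localization.localRingHom_to_map] at this
  have hinjloc : Function.Injective (algebraMap T (Localization.AtPrime q'.asIdeal)) :=
    IsLocalization.injective _ q'.asIdeal.primeCompl_le_nonZeroDivisors
  have : algebraMap T (Localization.AtPrime q'.asIdeal) (x * algebraMap C T s.1) =
      algebraMap T (Localization.AtPrime q'.asIdeal) (algebraMap C T a) := by
    rw [map_mul]; exact this
  rw [mul_comm]
  exact hinjloc this

section

variable {C T : Type u} [CommRing C] [IsDomain C] [CommRing T] [IsDomain T] [Algebra C T]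

include C T in
/-- `T` embeds into the fraction field of `C`. -/
lemma krull_aux_gexists
    (hinj : Function.Injective (algebraMap C T))
    (L1 : ∀ (x : T) (q' : PrimeSpectrum T), ∃ a s : C,
      s ∉ (PrimeSpectrum.comap (algebraMap C T) q').asIdeal ∧
      algebraMap C T s * x = algebraMap C T a) :
    ∃ g : T →+* FractionRing C, Function.Injective g ∧
      ∀ c : C, g (algebraMap C T c) = algebraMap C (FractionRing C) c := by
  letI : Algebra C (FractionRing T) :=
    ((algebraMap T (FractionRing T)).comp (algebraMap C T)).toAlgebra
  have halg : ∀ c : C, algebraMap C (FractionRing T) c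
      = algebraMap T (FractionRing T) (algebraMap C T c) := fun _ => rfl
  have hL1' : ∀ x : T, ∃ a s : C, s ≠ 0 ∧ algebraMap C T s * x = algebraMap C T a := by
    intro x
    obtain ⟨a, s, hs, h⟩ := L1 x ⟨⊥, Ideal.bot_prime⟩
    refine ⟨a, s, fun h0 => hs ?_, h⟩
    subst h0
    simp [Ideal.mem_comap]
  haveI : IsLocalization (nonZeroDivisors C) (FractionRing T) := by
    refine ⟨⟨?_, ?_, ?_⟩⟩
    · rintro ⟨s, hs⟩
      have : algebraMap C T s ≠ 0 := fun h =>
        nonZeroDivisors.ne_zero hs (hinj (h.trans (map_zero _).symm))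
      exact IsLocalization.map_units (M := nonZeroDivisors T) (FractionRing T)
        ⟨algebraMap C T s, mem_nonZeroDivisors_of_ne_zero this⟩
    · intro z
      obtain ⟨⟨t₁, t₂⟩, ht⟩ := IsLocalization.surj (nonZeroDivisors T) z
      obtain ⟨a₁, s₁, hs₁, h₁⟩ := hL1' t₁
      obtain ⟨a₂, s₂, hs₂, h₂⟩ := hL1' t₂.1
      have ha₂ : a₂ ≠ 0 := by
        intro h0
        apply nonZeroDivisors.ne_zero t₂.2
        have : algebraMap C T s₂ * t₂.1 = 0 := by rw [h₂, h0, map_zero]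
        rcases mul_eq_zero.1 this with h | h
        · exact absurd (hinj (h.trans (map_zero _).symm)) hs₂
        · exact h
      refine ⟨⟨a₁ * s₂, ⟨s₁ * a₂, mem_nonZeroDivisors_of_ne_zero (mul_ne_zero hs₁ ha₂)⟩⟩, ?_⟩
      have key : (algebraMap T (FractionRing T)) (algebraMap C T (s₁ * a₂)) * z
          = algebraMap T (FractionRing T) (algebraMap C T (a₁ * s₂)) := by
        rw [map_mul, map_mul, map_mul, map_mul]
        calc (algebraMap T (FractionRing T)) (algebraMap C T s₁) *
              ((algebraMap T (FractionRing T)) (algebraMap C T a₂)) * z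
            = (algebraMap T (FractionRing T)) (algebraMap C T s₁) *
              ((algebraMap T (FractionRing T)) (algebraMap C T s₂ * t₂.1)) * z := by rw [h₂]
          _ = (algebraMap T (FractionRing T)) (algebraMap C T s₂) *
              ((algebraMap T (FractionRing T)) (algebraMap C T s₁) *
               (algebraMap T (FractionRing T) t₂.1 * z)) := by rw [map_mul]; ring
          _ = (algebraMap T (FractionRing T)) (algebraMap C T s₂) *
              ((algebraMap T (FractionRing T)) (algebraMap C T s₁) *
               (algebraMap T (FractionRing T) t₁)) := by
                rw [show algebraMap T (FractionRing T) t₂.1 * z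
                    = algebraMap T (FractionRing T) t₁ by
                  rw [mul_comm]; exact ht]
          _ = (algebraMap T (FractionRing T)) (algebraMap C T s₂) *
              ((algebraMap T (FractionRing T)) (algebraMap C T a₁)) := by
                congr 1
                rw [← map_mul, h₁]
          _ = (algebraMap T (FractionRing T)) (algebraMap C T a₁) *
              (algebraMap T (FractionRing T)) (algebraMap C T s₂) := by ring
      rw [halg, halg, mul_comm]
      exact key
    · intro x y hxy
      rw [halg, halg] at hxy
      exact ⟨1, by rw [hinj ((IsFractionRing.injective T (FractionRing T)) hxy)]⟩
  letI e := IsLocalization.algEquiv (nonZeroDivisors C) (FractionRing T) (FractionRing C)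
  refine ⟨(e : FractionRing T →+* FractionRing C).comp (algebraMap T (FractionRing T)),
    ?_, ?_⟩
  · exact e.injective.comp (IsFractionRing.injective T (FractionRing T))
  · intro c
    have : e (algebraMap C (FractionRing T) c) = algebraMap C (FractionRing C) c := e.commutes c
    simpa [halg] using this

/-- The contradiction in the case where `Spec C \ Spec T = V(p)`. -/
lemma krull_aux_case1_false [UniqueFactorizationMonoid T]
    (hinj : Function.Injective (algebraMap C T))
    (p : Ideal C) (hp : p.IsPrime)
    (hDVR : IsDiscreteValuationRing (Localization.AtPrime p))
    (g : T →+* FractionRing C)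
    (hg_inj : Function.Injective g)
    (hg_comp : ∀ c : C, g (algebraMap C T c) = algebraMap C (FractionRing C) c)
    (L2 : ∀ x : T, (∃ a s : C, s ∉ p ∧ algebraMap C T s * x = algebraMap C T a) →
      ∃ d : C, algebraMap C T d = x)
    (h4 : ∀ t : T, IsUnit t ↔ ∃ c : C, IsUnit c ∧ algebraMap C T c = t)
    (h5 : ∀ t : T, Prime t → t ∉ algebraMap C T '' (p : Set C)) :
    False := by
  classical
  haveI := hDVR
  haveI := hp
  set K := FractionRing C
  set D := Localization.AtPrime p with hD
  -- the map ι : D →+* K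
  have hunits : ∀ y : p.primeCompl, IsUnit (algebraMap C K y) := by
    rintro ⟨s, hs⟩
    have hs0 : s ≠ 0 := fun h => hs (h ▸ p.zero_mem)
    exact IsLocalization.map_units (M := nonZeroDivisors C) K
      ⟨s, mem_nonZeroDivisors_of_ne_zero hs0⟩
  let ι : D →+* K := IsLocalization.lift (M := p.primeCompl) (S := D) hunits
  have hι : ∀ c : C, ι (algebraMap C D c) = algebraMap C K c := fun c =>
    IsLocalization.lift_eq hunits c
  have hCD_inj : Function.Injective (algebraMap C D) :=
    IsLocalization.injective D p.primeCompl_le_nonZeroDivisors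
  have hCK_inj : Function.Injective (algebraMap C K) := IsFractionRing.injective C K
  have hι_inj : Function.Injective ι := by
    rw [injective_iff_map_eq_zero]
    intro d hd
    obtain ⟨⟨a, s⟩, hds⟩ := IsLocalization.surj (M := p.primeCompl) d
    have : ι d * algebraMap C K s.1 = algebraMap C K a := by
      rw [← hι, ← hι, ← map_mul]; exact congrArg ι hds
    rw [hd, zero_mul] at this
    have ha : a = 0 := hCK_inj (by rw [← this, map_zero])
    have hσ : algebraMap C D s.1 ≠ 0 := fun h =>
      s.2 (hCD_inj (h.trans (map_zero _).symm) ▸ p.zero_mem)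
    have : d * algebraMap C D s.1 = 0 := by rw [hds, ha, map_zero]
    rcases mul_eq_zero.1 this with h | h
    · exact h
    · exact absurd h hσ
  -- uniformizer
  obtain ⟨π, hπ⟩ := IsDiscreteValuationRing.exists_irreducible D
  have hπ0 : π ≠ 0 := hπ.ne_zero
  have hιπ0 : (ι π : K) ≠ 0 := fun h => hπ0 (hι_inj (h.trans (map_zero ι).symm))
  -- unit powers uniqueness
  have huniq0 : ∀ (u v : Dˣ) (k : ℕ), (u : D) = v * π ^ k → k = 0 := by
    intro u v k h
    by_contra hk
    obtain ⟨j, rfl⟩ : ∃ j, k = j + 1 := ⟨k - 1, by omega⟩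
    have : π ∣ (u : D) := ⟨v * π ^ j, by rw [h, pow_succ]; ring⟩
    exact hπ.not_isUnit (isUnit_of_dvd_unit this u.isUnit)
  have huniq : ∀ (u v : Dˣ) (m n : ℤ), (ι u : K) * (ι π) ^ m = ι v * (ι π) ^ n → m = n := by
    have aux : ∀ (u v : Dˣ) (m n : ℤ), m ≤ n →
        (ι u : K) * (ι π) ^ m = ι v * (ι π) ^ n → m = n := by
      intro u v m n hmn h
      have h2 : (ι u : K) = ι v * (ι π) ^ (n - m) := by
        have := congrArg (fun x : K => x * (ι π) ^ (-m)) h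
        rwa [mul_assoc, mul_assoc, ← zpow_add₀ hιπ0, ← zpow_add₀ hιπ0, add_neg_cancel,
          zpow_zero, mul_one, ← sub_eq_add_neg] at this
      set k := (n - m).toNat with hk
      have hnm : (n - m) = (k : ℤ) := (Int.toNat_of_nonneg (by omega)).symm
      have h3 : (ι u : K) = ι (v * π ^ k) := by
        rw [map_mul, map_pow, h2, hnm, zpow_natCast]
      have h4 : (u : D) = v * π ^ k := hι_inj h3
      have := huniq0 u v k h4
      omega
    intro u v m n h
    rcases le_total m n with hmn | hmn
    · exact aux u v m n hmn h
    · exact (aux v u n m hmn h.symm).symm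
  -- existence of representation
  have rep : ∀ ξ : K, ξ ≠ 0 → ∃ (n : ℤ) (u : Dˣ), ξ = ι u * (ι π) ^ n := by
    intro ξ hξ
    obtain ⟨⟨a, s⟩, hs⟩ := IsLocalization.surj (M := nonZeroDivisors C) ξ
    have hsu : IsUnit (algebraMap C K s.1) := IsLocalization.map_units K s
    have ha0 : a ≠ 0 := by
      intro h0
      rw [h0, map_zero] at hs
      rcases mul_eq_zero.1 hs with h | h
      · exact hξ h
      · exact hsu.ne_zero h
    have hs0 : s.1 ≠ 0 := nonZeroDivisors.ne_zero s.2
    have haD : algebraMap C D a ≠ 0 := fun h => ha0 (hCD_inj (h.trans (map_zero _).symm))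
    have hsD : algebraMap C D s.1 ≠ 0 := fun h => hs0 (hCD_inj (h.trans (map_zero _).symm))
    obtain ⟨m₁, u₁, hu₁⟩ := IsDiscreteValuationRing.eq_unit_mul_pow_irreducible haD hπ
    obtain ⟨m₂, u₂, hu₂⟩ := IsDiscreteValuationRing.eq_unit_mul_pow_irreducible hsD hπ
    have e1 : algebraMap C K a = ι ↑u₁ * (ι π) ^ (m₁ : ℤ) := by
      rw [← hι, hu₁, map_mul, map_pow, zpow_natCast]
    have e2 : algebraMap C K s.1 = ι ↑u₂ * (ι π) ^ (m₂ : ℤ) := by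
      rw [← hι, hu₂, map_mul, map_pow, zpow_natCast]
    refine ⟨(m₁ : ℤ) - m₂, u₁ * u₂⁻¹, ?_⟩
    have hu2K : (ι ↑u₂ : K) ≠ 0 := fun h => u₂.ne_zero (hι_inj (h.trans (map_zero ι).symm))
    have hw : (ι ↑u₂ * (ι π) ^ (m₂ : ℤ) : K) ≠ 0 :=
      mul_ne_zero hu2K (zpow_ne_zero _ hιπ0)
    apply mul_right_cancel₀ hw
    have hinvu : (ι ↑u₂⁻¹ : K) * ι ↑u₂ = 1 := by
      rw [← map_mul, ← Units.val_mul, inv_mul_cancel, Units.val_one, map_one]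
    calc ξ * (ι ↑u₂ * (ι π) ^ (m₂ : ℤ))
        = ξ * algebraMap C K s.1 := by rw [e2]
      _ = algebraMap C K a := hs
      _ = ι ↑u₁ * (ι π) ^ (m₁ : ℤ) := e1
      _ = (ι ↑(u₁ * u₂⁻¹) * (ι π) ^ ((m₁ : ℤ) - m₂)) * (ι ↑u₂ * (ι π) ^ (m₂ : ℤ)) := by
          rw [Units.val_mul, map_mul]
          have hzp : (ι π : K) ^ ((m₁ : ℤ) - m₂) * (ι π) ^ (m₂ : ℤ) = (ι π) ^ (m₁ : ℤ) := by
            rw [← zpow_add₀ hιπ0, sub_add_cancel]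
          calc ι ↑u₁ * (ι π) ^ (m₁ : ℤ)
              = ι ↑u₁ * ((ι ↑u₂⁻¹ * ι ↑u₂) * ((ι π) ^ ((m₁ : ℤ) - m₂) * (ι π) ^ (m₂ : ℤ))) := by
                rw [hinvu, hzp, one_mul]
            _ = ι ↑u₁ * ι ↑u₂⁻¹ * (ι π) ^ ((m₁ : ℤ) - m₂) * (ι ↑u₂ * (ι π) ^ (m₂ : ℤ)) := by ring
            _ = (ι ↑u₁ * ι ↑u₂⁻¹ * (ι π) ^ ((m₁ : ℤ) - m₂)) * (ι ↑u₂ * (ι π) ^ (m₂ : ℤ)) := by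
                ring
  -- main induction
  have P : ∀ x : T, x ≠ 0 → ∃ (n : ℤ) (u : Dˣ), n ≤ 0 ∧ g x = ι u * (ι π) ^ n := by
    intro x
    induction x using UniqueFactorizationMonoid.induction_on_prime with
    | h₁ => exact fun h => absurd rfl h
    | h₂ x hx =>
      intro _
      obtain ⟨c, hc, hcx⟩ := (h4 x).1 hx
      refine ⟨0, (hc.map (algebraMap C D)).unit, le_refl _, ?_⟩
      rw [zpow_zero, mul_one, ← hcx, hg_comp, ← hι, IsUnit.unit_spec]
    | h₃ a t ha hprime ih =>
      intro _
      have ht0 : t ≠ 0 := hprime.ne_zero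
      obtain ⟨na, ua, hna, hga⟩ := ih ha
      have hgt0 : g t ≠ 0 := fun h => ht0 (hg_inj (h.trans (map_zero g).symm))
      obtain ⟨nt, ut, hrept⟩ := rep (g t) hgt0
      have hnt : nt ≤ 0 := by
        by_contra hpos
        push_neg at hpos
        have hntn : (nt : ℤ) = (nt.toNat : ℤ) := (Int.toNat_of_nonneg (le_of_lt hpos)).symm
        set d : D := ↑ut * π ^ nt.toNat with hd'
        have hgtd : g t = ι d := by
          rw [hd', map_mul, map_pow, hrept, ← zpow_natCast (ι π), ← hntn]
        obtain ⟨⟨a₁, s₁⟩, hds⟩ := IsLocalization.surj (M := p.primeCompl) d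
        have hK : g (algebraMap C T s₁.1 * t) = g (algebraMap C T a₁) := by
          rw [map_mul, hg_comp, hg_comp, hgtd, mul_comm, ← hι, ← hι, ← map_mul]
          exact congrArg ι hds
        have hT : algebraMap C T s₁.1 * t = algebraMap C T a₁ := hg_inj hK
        obtain ⟨e, he⟩ := L2 t ⟨a₁, s₁.1, s₁.2, hT⟩
        have hed : algebraMap C D e = d := hι_inj (by rw [hι, ← hg_comp, he, hgtd])
        have hep : e ∈ p := by
          by_contra hep
          have hu : IsUnit (algebraMap C D e) :=
            (IsLocalization.AtPrime.isUnit_to_map_iff D p e).2 hep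
          rw [hed, hd'] at hu
          have : IsUnit (π ^ nt.toNat) := isUnit_of_mul_isUnit_right hu
          have hk0 : nt.toNat ≠ 0 := by omega
          exact hπ.not_isUnit ((isUnit_pow_iff hk0).1 this)
        exact h5 t hprime ⟨e, hep, he⟩
      refine ⟨nt + na, ut * ua, by omega, ?_⟩
      rw [map_mul, hrept, hga, Units.val_mul, map_mul, zpow_add₀ hιπ0]
      ring
  -- conclusion
  obtain ⟨⟨a₁, s₁⟩, hds⟩ := IsLocalization.surj (M := p.primeCompl) π
  have hs₁u : IsUnit (algebraMap C D s₁.1) :=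
    (IsLocalization.AtPrime.isUnit_to_map_iff D p s₁.1).2 s₁.2
  have ha₁D : algebraMap C D a₁ = hs₁u.unit * π := by rw [IsUnit.unit_spec, ← hds]; ring
  have ha₁0 : a₁ ≠ 0 := by
    intro h0
    rw [h0, map_zero] at ha₁D
    rcases mul_eq_zero.1 ha₁D.symm with h | h
    · exact hs₁u.ne_zero h
    · exact hπ0 h
  have hτ0 : algebraMap C T a₁ ≠ 0 := fun h => ha₁0 (hinj (h.trans (map_zero _).symm))
  obtain ⟨n, u, hn, hgu⟩ := P (algebraMap C T a₁) hτ0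
  have hval : g (algebraMap C T a₁) = ι ↑hs₁u.unit * (ι π) ^ (1 : ℤ) := by
    rw [hg_comp, ← hι, ha₁D, map_mul, zpow_one]
  have := huniq u hs₁u.unit n 1 (by rw [← hgu, hval])
  omega

end

end Auxiliary

/-- Let `C ⊆ T` be integral domains such that (1) `C` is a Krull domain and `T` is a UFD;
(2) `Spec T → Spec C` is an open immersion; (3) the closed set `Spec C \ Spec T` is `V(p)`
for a single height-one prime `p` of `C`, or is empty; (4) `T^× = C^×`;
(5) no prime element of `T` belongs to `p`.  Then `T = C`. -/
theorem krull_eq_of_open_immersion_prime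
    (C T : Type u) [CommRing C] [IsDomain C] [CommRing T] [IsDomain T] [Algebra C T]
    (hinj : Function.Injective (algebraMap C T))
    -- (1)
    (h1 : IsKrullDomain C) [UniqueFactorizationMonoid T]
    -- (2)
    (h2 : AlgebraicGeometry.IsOpenImmersion
      (AlgebraicGeometry.Spec.map (CommRingCat.ofHom (algebraMap C T))))
    -- (3)
    (p : Ideal C) (hp : p.IsPrime)
    (hht : Order.height (⟨p, hp⟩ : PrimeSpectrum C) = 1)
    (h3 : (Set.range (PrimeSpectrum.comap (algebraMap C T)))ᶜ =
        PrimeSpectrum.zeroLocus (p : Set C) ∨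
      (Set.range (PrimeSpectrum.comap (algebraMap C T)))ᶜ = ∅)
    -- (4)
    (h4 : ∀ t : T, IsUnit t ↔ ∃ c : C, IsUnit c ∧ algebraMap C T c = t)
    -- (5)
    (h5 : ∀ t : T, Prime t → t ∉ algebraMap C T '' (p : Set C)) :
    Function.Surjective (algebraMap C T) := by
  classical
  have L1 := krull_aux_L1 C T h2
  obtain ⟨g, hg_inj, hg_comp⟩ := krull_aux_gexists hinj L1
  have key : ∀ x : T, (∀ q : PrimeSpectrum C, Order.height q = 1 →
      ∃ a s : C, s ∉ q.asIdeal ∧ algebraMap C T s * x = algebraMap C T a) →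
      ∃ d : C, algebraMap C T d = x := by
    intro x hx
    have hK : ∀ q : PrimeSpectrum C, Order.height q = 1 →
        ∃ a s : C, s ∉ q.asIdeal ∧
          g x * algebraMap C (FractionRing C) s = algebraMap C (FractionRing C) a := by
      intro q hq
      obtain ⟨a, s, hs, he⟩ := hx q hq
      refine ⟨a, s, hs, ?_⟩
      have hge := congrArg g he
      rw [map_mul, hg_comp, hg_comp] at hge
      rw [mul_comm]
      exact hge
    obtain ⟨d, hd⟩ := h1.2.2 (g x) hK
    exact ⟨d, hg_inj (by rw [hg_comp, hd])⟩
  rcases h3 with hcase | hcase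
  · exfalso
    have hrange : ∀ q : PrimeSpectrum C, Order.height q = 1 → q.asIdeal ≠ p →
        q ∈ Set.range (PrimeSpectrum.comap (algebraMap C T)) := by
      intro q hq hne
      by_contra hq'
      have hmem : q ∈ PrimeSpectrum.zeroLocus (p : Set C) := hcase ▸ hq'
      have hle : p ≤ q.asIdeal := (PrimeSpectrum.mem_zeroLocus _ _).1 hmem
      have hlt : (⟨p, hp⟩ : PrimeSpectrum C) < q := by
        refine lt_of_le_of_ne hle fun h => hne ?_
        exact (congrArg PrimeSpectrum.asIdeal h).symm
      have hmono := Order.height_strictMono hlt (by rw [hht]; exact lt_top_iff_ne_top.2 (by simp))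
      rw [hht, hq] at hmono
      exact lt_irrefl _ hmono
    have L2 : ∀ x : T, (∃ a s : C, s ∉ p ∧ algebraMap C T s * x = algebraMap C T a) →
        ∃ d : C, algebraMap C T d = x := by
      rintro x ⟨a0, s0, hs0, he0⟩
      refine key x fun q hq => ?_
      by_cases hqp : q.asIdeal = p
      · exact ⟨a0, s0, by rw [hqp]; exact hs0, he0⟩
      · obtain ⟨q', rfl⟩ := hrange q hq hqp
        exact L1 x q'
    exact krull_aux_case1_false hinj p hp (h1.1 ⟨p, hp⟩ hht) g hg_inj hg_comp L2 h4 h5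
  · intro x
    refine key x fun q hq => ?_
    have hq' : q ∈ Set.range (PrimeSpectrum.comap (algebraMap C T)) := by
      by_contra h
      exact absurd (hcase ▸ h : q ∈ (∅ : Set (PrimeSpectrum C))) (Set.notMem_empty q)
    obtain ⟨q', rfl⟩ := hq'
    exact L1 x q'
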